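/- Let G be a finite simple (C₄,C₅)-free graph of minimum degree δ ≥ 3 and maximum degree Δ. If v is a vertex of degree Δ, then the number of vertices at distance at most 3 from v satisfies |N_{≤3}(v)| ≥ Δ(δ−1) + (δ−2)·√(Δ(δ−3)) + 3/2. -/

import Mathlib

open SimpleGraph

/-- The eccentricity of a vertex `v`: the maximum distance from `v` to a vertex of `G`. -/
noncomputable def eccent {V : Type*} (G : SimpleGraph V) (v : V) : ℕ :=
  sSup (Set.range (G.dist v))

/-- The average eccentricity of a finite graph `G`. -/
noncomputable def avec {V : Type*} (G : SimpleGraph V) : ℝ :=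
  (∑ᶠ v, (eccent G v : ℝ)) / (Nat.card V)

/-- `G` contains no cycle of length `m` as a (not necessarily induced) subgraph. -/
def CycleFree {V : Type*} (G : SimpleGraph V) (m : ℕ) : Prop :=
  ∀ ⦃v : V⦄ (w : G.Walk v v), w.IsCycle → w.length ≠ m

open Finset in
lemma cycle4 {V : Type*} {G : SimpleGraph V} (h4 : CycleFree G 4) {a b c d : V}
    (hab : G.Adj a b) (hbc : G.Adj b c) (hcd : G.Adj c d) (hda : G.Adj d a)
    (hac : a ≠ c) (hbd : b ≠ d) : False := by
  refine h4 (.cons hab (.cons hbc (.cons hcd (.cons hda .nil)))) ?_ rfl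
  simp [Walk.isCycle_def, Walk.isTrail_def, hab.ne, hbc.ne, hcd.ne, hda.ne, hac, hbd,
    hab.ne', hbc.ne', hcd.ne', hda.ne', hac.symm, hbd.symm, Sym2.eq_iff]

open Finset in
lemma cycle5 {V : Type*} {G : SimpleGraph V} (h5 : CycleFree G 5) {a b c d e : V}
    (hab : G.Adj a b) (hbc : G.Adj b c) (hcd : G.Adj c d) (hde : G.Adj d e) (hea : G.Adj e a)
    (hac : a ≠ c) (had : a ≠ d) (hbd : b ≠ d) (hbe : b ≠ e) (hce : c ≠ e) : False := by
  refine h5 (.cons hab (.cons hbc (.cons hcd (.cons hde (.cons hea .nil))))) ?_ rfl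
  simp [Walk.isCycle_def, Walk.isTrail_def, hab.ne, hbc.ne, hcd.ne, hde.ne, hea.ne,
    hab.ne', hbc.ne', hcd.ne', hde.ne', hea.ne', hac, had, hbd, hbe, hce,
    hac.symm, had.symm, hbd.symm, hbe.symm, hce.symm, Sym2.eq_iff]

open Finset in
/-- no two distinct vertices have two distinct common neighbours -/
lemma commonNbr {V : Type*} {G : SimpleGraph V} (h4 : CycleFree G 4) {a b x y : V}
    (hax : G.Adj x a) (hay : G.Adj y a) (hbx : G.Adj x b) (hby : G.Adj y b)
    (hab : a ≠ b) (hxy : x ≠ y) : False :=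
  cycle4 h4 hax.symm hbx hby.symm hay hab hxy

open Finset in
set_option maxHeartbeats 2000000 in
theorem stmt_5 {V : Type*} [Fintype V] (G : SimpleGraph V) [DecidableRel G.Adj]
    (h4 : CycleFree G 4) (h5 : CycleFree G 5) (δ Δ : ℕ) (hδ : δ = G.minDegree) (h3 : 3 ≤ δ)
    (hΔ : Δ = G.maxDegree) (v : V) (hv : G.degree v = Δ) :
    (Δ : ℝ) * ((δ : ℝ) - 1) + ((δ : ℝ) - 2) * Real.sqrt ((Δ : ℝ) * ((δ : ℝ) - 3)) + 3 / 2 ≤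
      ({x : V | G.edist v x ≤ 3}.ncard : ℝ) := by
  classical
  have hδdeg : ∀ u : V, δ ≤ G.degree u := fun u => hδ ▸ G.minDegree_le_degree u
  have hδΔ : δ ≤ Δ := hv ▸ hδdeg v
  -- distance classes
  set N1 : Finset V := G.neighborFinset v with hN1
  set N2 : Finset V := univ.filter (fun x => G.edist v x = 2) with hN2def
  set N3 : Finset V := univ.filter (fun x => G.edist v x = 3) with hN3def
  have memN1 : ∀ x, x ∈ N1 ↔ G.edist v x = 1 := by
    intro x; rw [hN1, mem_neighborFinset, edist_eq_one_iff_adj]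
  have memN2 : ∀ x, x ∈ N2 ↔ G.edist v x = 2 := by intro x; simp [hN2def]
  have memN3 : ∀ x, x ∈ N3 ↔ G.edist v x = 3 := by intro x; simp [hN3def]
  -- unique branch of an N2 vertex
  have bex : ∀ w, G.edist v w = 2 → ∃ u, G.Adj v u ∧ G.Adj u w := by
    intro w hw
    obtain ⟨p, hp⟩ := exists_walk_of_edist_eq_coe hw
    cases p with
    | nil => simp at hp
    | cons h q =>
      exact ⟨_, h, Walk.adj_of_length_eq_one (by simpa using hp)⟩
  have buniq : ∀ w, G.edist v w = 2 → ∀ u u', G.Adj v u → G.Adj u w → G.Adj v u' → G.Adj u' w →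
      u = u' := by
    intro w hw u u' h1 h2 h1' h2'
    by_contra hne
    have hvw : v ≠ w := by intro h; rw [← h, SimpleGraph.edist_self] at hw; simp at hw
    exact commonNbr h4 h1 h2.symm h1' h2'.symm hne hvw
  -- each vertex has at most one neighbour in N1  (for u adjacent to v, or w in N2)
  have atmost1 : ∀ w : V, v ≠ w → ((G.neighborFinset w).filter (fun x => G.Adj v x)).card ≤ 1 := by
    intro w hvw
    refine card_le_one.mpr ?_
    intro a ha b hb
    simp only [mem_filter, mem_neighborFinset] at ha hb
    by_contra hne
    exact commonNbr h4 ha.2 ha.1 hb.2 hb.1 hne hvw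
  -- an N2-N2 edge forces equal branches
  have claimE : ∀ w w', G.edist v w = 2 → G.edist v w' = 2 → G.Adj w w' →
      ∀ u u', G.Adj v u → G.Adj u w → G.Adj v u' → G.Adj u' w' → u = u' := by
    intro w w' hw hw' hww' u u' h1 h2 h1' h2'
    by_contra hne
    have e1 : G.edist v u = 1 := edist_eq_one_iff_adj.mpr h1
    have e1' : G.edist v u' = 1 := edist_eq_one_iff_adj.mpr h1'
    refine cycle5 h5 h1 h2 hww' h2'.symm h1'.symm ?_ ?_ ?_ ?_ ?_
    · intro h; rw [← h, SimpleGraph.edist_self] at hw; simp at hw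
    · intro h; rw [← h, SimpleGraph.edist_self] at hw'; simp at hw'
    · intro h; rw [h, hw'] at e1; simp at e1
    · exact hne
    · intro h; rw [h, e1'] at hw; simp at hw
  -- each N2 vertex has at most one neighbour inside N2
  have atmost2 : ∀ w, G.edist v w = 2 →
      ((G.neighborFinset w).filter (fun x => G.edist v x = 2)).card ≤ 1 := by
    intro w hw
    refine card_le_one.mpr ?_
    intro a ha b hb
    simp only [mem_filter, mem_neighborFinset] at ha hb
    by_contra hne
    obtain ⟨bw, hbw1, hbw2⟩ := bex w hw
    have hba : bw = bw := rfl
    have ea : ∀ y, G.Adj w y → G.edist v y = 2 → G.Adj bw y := by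
      intro y hy hy2
      obtain ⟨by', hby1, hby2⟩ := bex y hy2
      have := claimE w y hw hy2 hy bw by' hbw1 hbw2 hby1 hby2
      rwa [this]
    have hwa : G.Adj bw a := ea a ha.1 ha.2
    have hwb : G.Adj bw b := ea b hb.1 hb.2
    have hne2 : w ≠ bw := by
      intro h; rw [← h] at hbw1
      rw [edist_eq_one_iff_adj.mpr hbw1] at hw; simp at hw
    exact commonNbr h4 ha.1 hwa hb.1 hwb hne hne2
  -- counting the second neighbourhood branch-wise
  have hD : ∀ u ∈ N1, δ - 2 ≤ ((G.neighborFinset u).filter (fun x => G.edist v x = 2)).card := by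
    intro u hu
    have hvu : G.Adj v u := by rwa [hN1, mem_neighborFinset] at hu
    have hsub : G.neighborFinset u ⊆ insert v
        (((G.neighborFinset u).filter (fun x => G.Adj v x)) ∪
         ((G.neighborFinset u).filter (fun x => G.edist v x = 2))) := by
      intro y hy
      have hadj : G.Adj u y := by rwa [mem_neighborFinset] at hy
      have h2 : G.edist v y ≤ 2 := by
        calc G.edist v y ≤ G.edist v u + G.edist u y := G.edist_triangle
        _ ≤ 1 + 1 := add_le_add (le_of_eq (edist_eq_one_iff_adj.mpr hvu))
            (le_of_eq (edist_eq_one_iff_adj.mpr hadj))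
        _ = 2 := by norm_num
      have hne : G.edist v y ≠ ⊤ := ne_top_of_le_ne_top (by simp) h2
      lift G.edist v y to ℕ using hne with n hn
      have hn2 : n ≤ 2 := by exact_mod_cast h2
      interval_cases n
      · have : v = y := edist_eq_zero_iff.mp (by exact_mod_cast hn.symm)
        exact mem_insert.mpr (Or.inl this.symm)
      · have : G.Adj v y := edist_eq_one_iff_adj.mp (by exact_mod_cast hn.symm)
        exact mem_insert.mpr (Or.inr (mem_union_left _ (mem_filter.mpr ⟨hy, this⟩)))
      · exact mem_insert.mpr (Or.inr (mem_union_right _ (mem_filter.mpr ⟨hy, by exact_mod_cast hn.symm⟩)))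
    have hcard := card_le_card hsub
    have h1 := atmost1 u hvu.ne
    have hdeg : δ ≤ (G.neighborFinset u).card := by
      rw [card_neighborFinset_eq_degree]; exact hδdeg u
    have h5' := card_insert_le v (((G.neighborFinset u).filter (fun x => G.Adj v x)) ∪
         ((G.neighborFinset u).filter (fun x => G.edist v x = 2)))
    have h6' := card_union_le ((G.neighborFinset u).filter (fun x => G.Adj v x))
         ((G.neighborFinset u).filter (fun x => G.edist v x = 2))
    omega
  have hN2card : Δ * (δ - 2) ≤ N2.card := by
    have hdisj : ∀ u ∈ N1, ∀ u' ∈ N1, u ≠ u' → Disjoint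
        ((G.neighborFinset u).filter (fun x => G.edist v x = 2))
        ((G.neighborFinset u').filter (fun x => G.edist v x = 2)) := by
      intro u hu u' hu' hne
      rw [Finset.disjoint_left]
      intro x hx hx'
      simp only [mem_filter, mem_neighborFinset] at hx hx'
      exact hne (buniq x hx.2 u u' (by rwa [hN1, mem_neighborFinset] at hu) hx.1
        (by rwa [hN1, mem_neighborFinset] at hu') hx'.1)
    have hsub : N1.biUnion (fun u => (G.neighborFinset u).filter (fun x => G.edist v x = 2)) ⊆ N2 := by
      intro x hx
      simp only [mem_biUnion, mem_filter, mem_neighborFinset] at hx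
      obtain ⟨u, _, _, h2⟩ := hx
      exact (memN2 x).mpr h2
    calc Δ * (δ - 2) = N1.card * (δ - 2) := by
          rw [hN1, card_neighborFinset_eq_degree, hv]
      _ = ∑ _u ∈ N1, (δ - 2) := by rw [Finset.sum_const, smul_eq_mul]
      _ ≤ ∑ u ∈ N1, ((G.neighborFinset u).filter (fun x => G.edist v x = 2)).card :=
          Finset.sum_le_sum hD
      _ = (N1.biUnion (fun u => (G.neighborFinset u).filter (fun x => G.edist v x = 2))).card :=
          (Finset.card_biUnion hdisj).symm
      _ ≤ N2.card := card_le_card hsub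
  -- each N2 vertex has many neighbours in N3
  have hdeg3 : ∀ w ∈ N2, δ - 2 ≤ ((G.neighborFinset w).filter (fun x => G.edist v x = 3)).card := by
    intro w hwmem
    have hw : G.edist v w = 2 := (memN2 w).mp hwmem
    have hvw : v ≠ w := by
      intro h; rw [← h, SimpleGraph.edist_self] at hw; simp at hw
    have hsub : G.neighborFinset w ⊆
        (((G.neighborFinset w).filter (fun x => G.Adj v x)) ∪
         ((G.neighborFinset w).filter (fun x => G.edist v x = 2))) ∪
         ((G.neighborFinset w).filter (fun x => G.edist v x = 3)) := by
      intro y hy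
      have hadj : G.Adj w y := by rwa [mem_neighborFinset] at hy
      have h2 : G.edist v y ≤ 3 := by
        calc G.edist v y ≤ G.edist v w + G.edist w y := G.edist_triangle
        _ ≤ 2 + 1 := add_le_add (le_of_eq hw) (le_of_eq (edist_eq_one_iff_adj.mpr hadj))
        _ = 3 := by norm_num
      have hne : G.edist v y ≠ ⊤ := ne_top_of_le_ne_top (by simp) h2
      lift G.edist v y to ℕ using hne with n hn
      have hn2 : n ≤ 3 := by exact_mod_cast h2
      have hn0 : n ≠ 0 := by
        intro h
        rw [h] at hn
        have : v = y := edist_eq_zero_iff.mp (by exact_mod_cast hn.symm)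
        rw [← this] at hadj
        rw [edist_eq_one_iff_adj.mpr hadj.symm] at hw
        simp at hw
      have hn1 : 1 ≤ n := Nat.one_le_iff_ne_zero.mpr hn0
      interval_cases n
      · have : G.Adj v y := edist_eq_one_iff_adj.mp (by exact_mod_cast hn.symm)
        exact mem_union_left _ (mem_union_left _ (mem_filter.mpr ⟨hy, this⟩))
      · exact mem_union_left _ (mem_union_right _ (mem_filter.mpr ⟨hy, by exact_mod_cast hn.symm⟩))
      · exact mem_union_right _ (mem_filter.mpr ⟨hy, by exact_mod_cast hn.symm⟩)
    have hcard := card_le_card hsub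
    have h1 := atmost1 w hvw
    have h2 := atmost2 w hw
    have hdeg : δ ≤ (G.neighborFinset w).card := by
      rw [card_neighborFinset_eq_degree]; exact hδdeg w
    have h3' := (card_union_le (((G.neighborFinset w).filter (fun x => G.Adj v x)) ∪
         ((G.neighborFinset w).filter (fun x => G.edist v x = 2)))
         ((G.neighborFinset w).filter (fun x => G.edist v x = 3)))
    have h4' := card_union_le ((G.neighborFinset w).filter (fun x => G.Adj v x))
         ((G.neighborFinset w).filter (fun x => G.edist v x = 2))
    omega
  -- nonemptiness and the N3 vertex of maximal back-degree
  have hΔ3 : 3 ≤ Δ := le_trans h3 hδΔ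
  have hN2ne : N2.Nonempty := by
    rw [← card_pos]
    have h0 : 0 < Δ * (δ - 2) := Nat.mul_pos (by omega) (by omega)
    omega
  obtain ⟨w0, hw0⟩ := hN2ne
  have hw0' := hdeg3 w0 hw0
  have hw0ne : ((G.neighborFinset w0).filter (fun x => G.edist v x = 3)).Nonempty := by
    rw [← card_pos]; omega
  obtain ⟨x0, hx0⟩ := hw0ne
  simp only [mem_filter, mem_neighborFinset] at hx0
  have hx0mem : x0 ∈ N3 := (memN3 x0).mpr hx0.2
  set d : V → ℕ := fun x => (N2.filter (fun w => G.Adj w x)).card with hd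
  obtain ⟨xs, hxsmem, hxsmax⟩ := N3.exists_max_image d ⟨x0, hx0mem⟩
  set s := d xs with hs
  have hs1 : 1 ≤ s := by
    have h1 : 1 ≤ d x0 := card_pos.mpr ⟨w0, mem_filter.mpr ⟨hw0, hx0.1⟩⟩
    exact le_trans h1 (hxsmax x0 hx0mem)
  -- bound (a) : N3 ≥ 1 + s(δ-3)
  set W := N2.filter (fun w => G.Adj w xs) with hW
  have hWcard : W.card = s := rfl
  set F : V → Finset V := fun w => ((G.neighborFinset w).filter (fun x => G.edist v x = 3)).erase xs
    with hF
  have hFcard : ∀ w ∈ W, δ - 3 ≤ (F w).card := by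
    intro w hwW
    have h1 := hdeg3 w (mem_filter.mp hwW).1
    have h2 := Finset.pred_card_le_card_erase
      (s := (G.neighborFinset w).filter (fun x => G.edist v x = 3)) (a := xs)
    simp only [hF]
    omega
  have hFdisj : ∀ w ∈ W, ∀ w' ∈ W, w ≠ w' → Disjoint (F w) (F w') := by
    intro w hwW w' hwW' hne
    rw [Finset.disjoint_left]
    intro y hy hy'
    simp only [hF, mem_erase, mem_filter, mem_neighborFinset] at hy hy'
    have hwxs : G.Adj w xs := (mem_filter.mp hwW).2
    have hwxs' : G.Adj w' xs := (mem_filter.mp hwW').2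
    exact commonNbr h4 hwxs.symm hy.2.1.symm hwxs'.symm hy'.2.1.symm hne (Ne.symm hy.1)
  have hxsnot : xs ∉ W.biUnion F := by
    intro h
    obtain ⟨w, -, hmem⟩ := mem_biUnion.mp h
    exact Finset.notMem_erase xs _ hmem
  have hbiun : insert xs (W.biUnion F) ⊆ N3 := by
    intro y hy
    rcases mem_insert.mp hy with h | h
    · rwa [h]
    · obtain ⟨w, -, hmem⟩ := mem_biUnion.mp h
      have hy3 : y ∈ (G.neighborFinset w).filter (fun x => G.edist v x = 3) :=
        Finset.mem_of_mem_erase hmem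
      exact (memN3 y).mpr (mem_filter.mp hy3).2
  have hN3a : 1 + s * (δ - 3) ≤ N3.card := by
    calc 1 + s * (δ - 3) = 1 + ∑ _w ∈ W, (δ - 3) := by
          rw [Finset.sum_const, smul_eq_mul, hWcard]
      _ ≤ 1 + ∑ w ∈ W, (F w).card := Nat.add_le_add_left (Finset.sum_le_sum hFcard) 1
      _ = 1 + (W.biUnion F).card := by rw [Finset.card_biUnion hFdisj]
      _ = (insert xs (W.biUnion F)).card := by rw [card_insert_of_notMem hxsnot, Nat.add_comm 1]
      _ ≤ N3.card := card_le_card hbiun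
  -- bound (b) : N2·(δ-2) ≤ N3·s  (double counting N2–N3 edges)
  have hEb : N2.card * (δ - 2) ≤ N3.card * s := by
    calc N2.card * (δ - 2) = ∑ _w ∈ N2, (δ - 2) := by rw [Finset.sum_const, smul_eq_mul]
      _ ≤ ∑ w ∈ N2, ((G.neighborFinset w).filter (fun x => G.edist v x = 3)).card :=
          Finset.sum_le_sum hdeg3
      _ = ∑ w ∈ N2, (N3.filter (fun x => G.Adj w x)).card := by
          refine Finset.sum_congr rfl (fun w hw => ?_)
          congr 1
          ext y
          simp only [mem_filter, mem_neighborFinset, hN3def, mem_univ, true_and]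
          tauto
      _ = ∑ w ∈ N2, ∑ x ∈ N3, if G.Adj w x then 1 else 0 :=
          Finset.sum_congr rfl fun w _ => Finset.card_filter _ _
      _ = ∑ x ∈ N3, ∑ w ∈ N2, if G.Adj w x then 1 else 0 := Finset.sum_comm
      _ = ∑ x ∈ N3, d x :=
          Finset.sum_congr rfl fun x _ => (Finset.card_filter _ _).symm
      _ ≤ ∑ _x ∈ N3, s := Finset.sum_le_sum (fun x hx => hxsmax x hx)
      _ = N3.card * s := by rw [Finset.sum_const, smul_eq_mul]
  have hbb : Δ * (δ - 2) * (δ - 2) ≤ N3.card * s :=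
    le_trans (Nat.mul_le_mul_right _ hN2card) hEb
  -- assembling the total count
  set S : Finset V := univ.filter (fun x => G.edist v x ≤ 3) with hS
  have hvnot : v ∉ N1 ∪ N2 ∪ N3 := by
    simp only [mem_union, memN1 v, memN2 v, memN3 v, SimpleGraph.edist_self]
    norm_num
  have hd12 : Disjoint N1 N2 := by
    rw [Finset.disjoint_left]; intro a h1 h2
    rw [memN1] at h1; rw [memN2] at h2; rw [h1] at h2; norm_num at h2
  have hd13 : Disjoint (N1 ∪ N2) N3 := by
    rw [Finset.disjoint_left]; intro a h1 h2
    rw [memN3] at h2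
    rcases mem_union.mp h1 with h | h
    · rw [memN1] at h; rw [h] at h2; norm_num at h2
    · rw [memN2] at h; rw [h] at h2; norm_num at h2
  have hsubS : insert v (N1 ∪ N2 ∪ N3) ⊆ S := by
    intro y hy
    simp only [hS, mem_filter, mem_univ, true_and]
    rcases mem_insert.mp hy with h | h
    · rw [← h, SimpleGraph.edist_self]; norm_num
    · rcases mem_union.mp h with h | h
      · rcases mem_union.mp h with h | h
        · rw [(memN1 y).mp h]; norm_num
        · rw [(memN2 y).mp h]; norm_num
      · rw [(memN3 y).mp h]
  have hN1card : N1.card = Δ := by rw [hN1, card_neighborFinset_eq_degree, hv]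
  have hcount : 1 + Δ + N2.card + N3.card ≤ S.card := by
    have e1 : (insert v (N1 ∪ N2 ∪ N3)).card = 1 + Δ + N2.card + N3.card := by
      rw [card_insert_of_notMem hvnot, card_union_of_disjoint hd13,
        card_union_of_disjoint hd12, hN1card]
      omega
    rw [← e1]
    exact card_le_card hsubS
  -- rewrite the goal in terms of S
  have hset : ({x : V | G.edist v x ≤ 3} : Set V) = ↑S := by
    ext x
    simp only [Set.mem_setOf_eq, hS, coe_filter, mem_univ, true_and]
  rw [hset, Set.ncard_coe_finset]
  -- real arithmetic
  have h2δ : (2 : ℕ) ≤ δ := by omega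
  have h3δ : (3 : ℕ) ≤ δ := h3
  have ra : (1 : ℝ) + (s : ℝ) * ((δ : ℝ) - 3) ≤ (N3.card : ℝ) := by
    have := (Nat.cast_le (α := ℝ)).mpr hN3a
    push_cast [Nat.cast_sub h3δ] at this
    linarith
  have rb : (Δ : ℝ) * ((δ : ℝ) - 2) * ((δ : ℝ) - 2) ≤ (N3.card : ℝ) * (s : ℝ) := by
    have := (Nat.cast_le (α := ℝ)).mpr hbb
    push_cast [Nat.cast_sub h2δ] at this
    linarith
  have rn2 : (Δ : ℝ) * ((δ : ℝ) - 2) ≤ (N2.card : ℝ) := by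
    have := (Nat.cast_le (α := ℝ)).mpr hN2card
    push_cast [Nat.cast_sub h2δ] at this
    linarith
  have rcount : (1 : ℝ) + (Δ : ℝ) + (N2.card : ℝ) + (N3.card : ℝ) ≤ (S.card : ℝ) := by
    have := (Nat.cast_le (α := ℝ)).mpr hcount
    push_cast at this
    linarith
  have rs : (1 : ℝ) ≤ (s : ℝ) := by exact_mod_cast hs1
  have rδ : (3 : ℝ) ≤ (δ : ℝ) := by exact_mod_cast h3
  have rΔ : (3 : ℝ) ≤ (Δ : ℝ) := by exact_mod_cast hΔ3
  set K := Real.sqrt ((Δ : ℝ) * ((δ : ℝ) - 3)) with hK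
  have hK0 : 0 ≤ K := Real.sqrt_nonneg _
  have hKmul : K = Real.sqrt (Δ : ℝ) * Real.sqrt ((δ : ℝ) - 3) :=
    Real.sqrt_mul (by positivity) _
  have hsq1 : Real.sqrt (Δ : ℝ) ^ 2 = (Δ : ℝ) := Real.sq_sqrt (by positivity)
  have hsq2 : Real.sqrt ((δ : ℝ) - 3) ^ 2 = (δ : ℝ) - 3 := Real.sq_sqrt (by linarith)
  -- key AM-GM step
  have key : 2 * (s : ℝ) * (((δ : ℝ) - 2) * K) ≤
      (s : ℝ) ^ 2 * ((δ : ℝ) - 3) + (Δ : ℝ) * ((δ : ℝ) - 2) * ((δ : ℝ) - 2) := by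
    have h0 := sq_nonneg ((s : ℝ) * Real.sqrt ((δ : ℝ) - 3) - ((δ : ℝ) - 2) * Real.sqrt (Δ : ℝ))
    have e1 : ((s : ℝ) * Real.sqrt ((δ : ℝ) - 3)) ^ 2 = (s : ℝ) ^ 2 * ((δ : ℝ) - 3) := by
      rw [mul_pow, hsq2]
    have e2 : (((δ : ℝ) - 2) * Real.sqrt (Δ : ℝ)) ^ 2 = ((δ : ℝ) - 2) ^ 2 * (Δ : ℝ) := by
      rw [mul_pow, hsq1]
    have e3 : ((s : ℝ) * Real.sqrt ((δ : ℝ) - 3)) * (((δ : ℝ) - 2) * Real.sqrt (Δ : ℝ)) =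
        (s : ℝ) * (((δ : ℝ) - 2) * K) := by rw [hKmul]; ring
    nlinarith [h0, e1, e2, e3]
  have hn3K : (1 : ℝ) / 2 + ((δ : ℝ) - 2) * K ≤ (N3.card : ℝ) := by
    have t1 : (s : ℝ) * ((1 : ℝ) + (s : ℝ) * ((δ : ℝ) - 3)) ≤ (s : ℝ) * (N3.card : ℝ) :=
      mul_le_mul_of_nonneg_left ra (by linarith)
    have t2 : (s : ℝ) * ((1 : ℝ) + 2 * (((δ : ℝ) - 2) * K)) ≤ 2 * ((s : ℝ) * (N3.card : ℝ)) := by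
      linarith [t1, key, rb]
    have t3 : ((1 : ℝ) + 2 * (((δ : ℝ) - 2) * K)) ≤ 2 * (N3.card : ℝ) := by
      have hspos : (0 : ℝ) < (s : ℝ) := by linarith
      nlinarith [t2, hspos]
    linarith
  linarith [rcount, rn2, hn3K]
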